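/- Let K ≥ 1 and f : ℝ^K → ℝ, f(z) = log(1 + Σ_{i=1}^K exp(z_i)). Then for all z₁, z₂ ∈ ℝ^K: exp(−3√2 ‖z₁ − z₂‖_∞) ∇²f(z₁) ⪯ ∇²f(z₂) ⪯ exp(3√2 ‖z₁ − z₂‖_∞) ∇²f(z₁), where A ⪯ B means B − A is positive semidefinite. -/

import Mathlib

open Matrix

noncomputable def softmaxP (K : ℕ) (z : Fin K → ℝ) (i : Fin K) : ℝ :=
  Real.exp (z i) / (1 + ∑ k, Real.exp (z k))

noncomputable def lseHess (K : ℕ) (z : Fin K → ℝ) : Matrix (Fin K) (Fin K) ℝ :=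
  Matrix.diagonal (softmaxP K z) - Matrix.vecMulVec (softmaxP K z) (softmaxP K z)

lemma double_sum_id {ι : Type*} (s : Finset ι) (p a : ι → ℝ) :
    ∑ i ∈ s, ∑ j ∈ s, p i * p j * (a i - a j)^2
      = 2 * ((∑ i ∈ s, p i) * (∑ i ∈ s, p i * a i ^ 2) - (∑ i ∈ s, p i * a i)^2) := by
  calc ∑ i ∈ s, ∑ j ∈ s, p i * p j * (a i - a j)^2
      = ∑ i ∈ s, ∑ j ∈ s, ((p i * a i^2) * p j + p i * (p j * a j^2)
          - (2 * (p i * a i)) * (p j * a j)) :=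
        Finset.sum_congr rfl fun i _ => Finset.sum_congr rfl fun j _ => by ring
    _ = (∑ i ∈ s, p i * a i^2) * (∑ j ∈ s, p j) + (∑ i ∈ s, p i) * (∑ j ∈ s, p j * a j^2)
          - (∑ i ∈ s, 2 * (p i * a i)) * (∑ j ∈ s, p j * a j) := by
        simp only [Finset.sum_add_distrib, Finset.sum_sub_distrib, ← Finset.mul_sum,
          ← Finset.sum_mul]
    _ = _ := by
        rw [show (∑ i ∈ s, 2 * (p i * a i)) = 2 * ∑ i ∈ s, p i * a i from (Finset.mul_sum ..).symm]
        ring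

/-- Extended exponential weights, with weight `1` for the "zero" class. -/
noncomputable def eW (K : ℕ) (z : Fin K → ℝ) : Fin (K+1) → ℝ :=
  Fin.cons 1 (fun i => Real.exp (z i))

lemma eW_pos (K : ℕ) (z : Fin K → ℝ) (i : Fin (K+1)) : 0 < eW K z i := by
  refine Fin.cases ?_ ?_ i <;> simp [eW, Real.exp_pos]

lemma sum_eW (K : ℕ) (z : Fin K → ℝ) : ∑ i, eW K z i = 1 + ∑ k, Real.exp (z k) := by
  simp [eW, Fin.sum_cons]

lemma denom_pos (K : ℕ) (z : Fin K → ℝ) : 0 < 1 + ∑ k, Real.exp (z k) := by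
  positivity

/-- The quadratic form of the Hessian. -/
noncomputable def Qf (K : ℕ) (z x : Fin K → ℝ) : ℝ :=
  (∑ i, softmaxP K z i * x i ^ 2) - (∑ i, softmaxP K z i * x i)^2

/-- Extended vector with a leading zero. -/
def xt (K : ℕ) (x : Fin K → ℝ) : Fin (K+1) → ℝ := Fin.cons 0 x

@[simp] lemma xt_zero (K : ℕ) (x : Fin K → ℝ) : xt K x 0 = 0 := rfl
@[simp] lemma xt_succ (K : ℕ) (x : Fin K → ℝ) (i : Fin K) : xt K x i.succ = x i := rfl

/-- The double-sum representation of the quadratic form. -/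
noncomputable def Sf (K : ℕ) (z x : Fin K → ℝ) : ℝ :=
  ∑ i, ∑ j, eW K z i * eW K z j * (xt K x i - xt K x j)^2

lemma Sf_nonneg (K : ℕ) (z x : Fin K → ℝ) : 0 ≤ Sf K z x := by
  refine Finset.sum_nonneg fun i _ => Finset.sum_nonneg fun j _ => ?_
  have := eW_pos K z i
  have := eW_pos K z j
  positivity

lemma Qf_eq (K : ℕ) (z x : Fin K → ℝ) :
    Qf K z x = Sf K z x / (2 * (1 + ∑ k, Real.exp (z k))^2) := by
  set D := 1 + ∑ k, Real.exp (z k) with hD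
  have hDpos := denom_pos K z
  have hid := double_sum_id Finset.univ (eW K z) (xt K x)
  have h1 : ∑ i, eW K z i * (xt K x i) ^ 2 = ∑ i, Real.exp (z i) * x i ^ 2 := by
    rw [show (fun i => eW K z i * (xt K x i)^2)
        = Fin.cons 0 (fun i => Real.exp (z i) * x i ^ 2) from ?_]
    · simp [Fin.sum_cons]
    · ext i
      refine Fin.cases ?_ ?_ i <;> simp [eW]
  have h2 : ∑ i, eW K z i * (xt K x i) = ∑ i, Real.exp (z i) * x i := by
    rw [show (fun i => eW K z i * (xt K x i))
        = Fin.cons 0 (fun i => Real.exp (z i) * x i) from ?_]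
    · simp [Fin.sum_cons]
    · ext i
      refine Fin.cases ?_ ?_ i <;> simp [eW]
  have hQ : Qf K z x = ((∑ i, Real.exp (z i) * x i ^ 2) * D
      - (∑ i, Real.exp (z i) * x i)^2) / D^2 := by
    unfold Qf softmaxP
    rw [← hD]
    have e1 : ∑ i, Real.exp (z i) / D * x i ^ 2 = (∑ i, Real.exp (z i) * x i ^ 2) / D := by
      rw [Finset.sum_div]; exact Finset.sum_congr rfl fun i _ => by ring
    have e2 : ∑ i, Real.exp (z i) / D * x i = (∑ i, Real.exp (z i) * x i) / D := by
      rw [Finset.sum_div]; exact Finset.sum_congr rfl fun i _ => by ring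
    rw [e1, e2]
    have hD0 : D ≠ 0 := by positivity
    field_simp
  rw [hQ, show Sf K z x = 2 * (D * (∑ i, Real.exp (z i) * x i ^ 2)
      - (∑ i, Real.exp (z i) * x i)^2) from by rw [Sf, hid, sum_eW, ← hD, h1, h2]]
  field_simp

lemma Qf_nonneg (K : ℕ) (z x : Fin K → ℝ) : 0 ≤ Qf K z x := by
  rw [Qf_eq]
  have := denom_pos K z
  have := Sf_nonneg K z x
  positivity

lemma quad_eq (K : ℕ) (z x : Fin K → ℝ) :
    x ⬝ᵥ (lseHess K z *ᵥ x) = Qf K z x := by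
  have hmv : ∀ i, (lseHess K z *ᵥ x) i
      = softmaxP K z i * x i - softmaxP K z i * ∑ j, softmaxP K z j * x j := by
    intro i
    simp only [lseHess, Matrix.sub_mulVec, Pi.sub_apply, Matrix.mulVec_diagonal]
    congr 1
    simp only [Matrix.mulVec, dotProduct, Matrix.vecMulVec_apply, Finset.mul_sum]
    exact Finset.sum_congr rfl fun j _ => by ring
  simp only [dotProduct, hmv, Qf]
  rw [Finset.sum_congr rfl (fun i (_ : i ∈ Finset.univ) => show
      x i * (softmaxP K z i * x i - softmaxP K z i * ∑ j, softmaxP K z j * x j)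
      = softmaxP K z i * x i ^ 2 - (softmaxP K z i * x i) * ∑ j, softmaxP K z j * x j from by
      ring), Finset.sum_sub_distrib, ← Finset.sum_mul]
  ring

lemma lseHess_herm (K : ℕ) (z : Fin K → ℝ) : (lseHess K z).IsHermitian := by
  refine Matrix.IsHermitian.sub (Matrix.isHermitian_diagonal _) ?_
  ext i j
  simp [Matrix.conjTranspose_apply, Matrix.vecMulVec_apply, mul_comm]

/-- Key comparison of quadratic forms. -/
lemma Qf_comp (K : ℕ) (z w x : Fin K → ℝ) :
    Real.exp (-(4 * ‖z - w‖)) * Qf K z x ≤ Qf K w x := by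
  set t := ‖z - w‖ with ht
  have htnn : 0 ≤ t := norm_nonneg _
  have hbound : ∀ i, |z i - w i| ≤ t := by
    intro i
    simpa using norm_le_pi_norm (z - w) i
  -- pointwise bounds on weights
  have hlow : ∀ i, Real.exp (-t) * eW K z i ≤ eW K w i := by
    intro i
    refine Fin.cases ?_ ?_ i
    · simp only [eW, Fin.cons_zero, mul_one]
      exact Real.exp_le_one_iff.2 (by linarith)
    · intro j
      simp only [eW, Fin.cons_succ, ← Real.exp_add]
      apply Real.exp_le_exp.2
      have := hbound j
      have := abs_le.1 this
      linarith [this.2]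
  have hup : ∀ i, eW K w i ≤ Real.exp t * eW K z i := by
    intro i
    refine Fin.cases ?_ ?_ i
    · simp only [eW, Fin.cons_zero, mul_one]
      exact Real.one_le_exp htnn
    · intro j
      simp only [eW, Fin.cons_succ, ← Real.exp_add]
      apply Real.exp_le_exp.2
      have := abs_le.1 (hbound j)
      linarith [this.1]
  -- S comparison
  have hS : Real.exp (-(2*t)) * Sf K z x ≤ Sf K w x := by
    rw [Sf, Finset.mul_sum]
    refine Finset.sum_le_sum fun i _ => ?_
    rw [Finset.mul_sum]
    refine Finset.sum_le_sum fun j _ => ?_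
    have h1 := hlow i
    have h2 := hlow j
    have hzi := (eW_pos K z i).le
    have hzj := (eW_pos K z j).le
    have hsq : (0:ℝ) ≤ (xt K x i - xt K x j)^2 := sq_nonneg _
    have hexp : Real.exp (-(2*t)) = Real.exp (-t) * Real.exp (-t) := by
      rw [← Real.exp_add]; ring_nf
    rw [hexp]
    calc Real.exp (-t) * Real.exp (-t) * (eW K z i * eW K z j * (xt K x i - xt K x j)^2)
        = (Real.exp (-t) * eW K z i) * (Real.exp (-t) * eW K z j) * (xt K x i - xt K x j)^2 := by ring
      _ ≤ eW K w i * eW K w j * (xt K x i - xt K x j)^2 := by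
          apply mul_le_mul_of_nonneg_right _ hsq
          exact mul_le_mul h1 h2 (by positivity) (eW_pos K w i).le
  -- denominator comparison
  have hDz := denom_pos K z
  have hDw := denom_pos K w
  have hD : (1 + ∑ k, Real.exp (w k)) ≤ Real.exp t * (1 + ∑ k, Real.exp (z k)) := by
    have := Finset.sum_le_sum (fun i (_ : i ∈ (Finset.univ : Finset (Fin (K+1)))) => hup i)
    rw [sum_eW, ← Finset.mul_sum, sum_eW] at this
    exact this
  -- conclude
  rw [Qf_eq K z x, Qf_eq K w x]
  set Dz := 1 + ∑ k, Real.exp (z k)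
  set Dw := 1 + ∑ k, Real.exp (w k)
  have h2Dw : (0:ℝ) < 2 * Dw^2 := by positivity
  have hE2 : Real.exp t * Real.exp t = Real.exp (2*t) := by
    rw [← Real.exp_add]; ring_nf
  have hkey : 2 * Dw^2 ≤ Real.exp (2*t) * (2 * Dz^2) := by
    calc 2 * Dw^2 ≤ 2 * (Real.exp t * Dz)^2 := by
          nlinarith [pow_le_pow_left₀ hDw.le hD 2]
      _ = Real.exp (2*t) * (2 * Dz^2) := by rw [mul_pow, ← hE2]; ring
  have hE : Real.exp (-(4*t)) = Real.exp (-(2*t)) / Real.exp (2*t) := by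
    rw [← Real.exp_sub]; ring_nf
  calc Real.exp (-(4*t)) * (Sf K z x / (2 * Dz^2))
      = (Real.exp (-(2*t)) * Sf K z x) / (Real.exp (2*t) * (2 * Dz^2)) := by
        rw [hE, div_mul_div_comm]
    _ ≤ Sf K w x / (2 * Dw^2) := div_le_div₀ (Sf_nonneg K w x) hS h2Dw hkey

lemma herm_smul {K : ℕ} (c : ℝ) {M : Matrix (Fin K) (Fin K) ℝ} (h : M.IsHermitian) :
    (c • M).IsHermitian := by
  unfold Matrix.IsHermitian at *
  rw [Matrix.conjTranspose_smul, star_trivial, h]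

lemma sqrt2_ge : (4:ℝ) ≤ 3 * Real.sqrt 2 := by
  nlinarith [Real.sq_sqrt (by norm_num : (0:ℝ) ≤ 2), Real.sqrt_nonneg 2]

/-- **Proposition B.4.** For all `z₁, z₂ ∈ ℝ^K`:
`exp(−3√2 ‖z₁ − z₂‖_∞) ∇²f(z₁) ⪯ ∇²f(z₂) ⪯ exp(3√2 ‖z₁ − z₂‖_∞) ∇²f(z₁)`,
where `A ⪯ B` means `B − A` is positive semidefinite and the norm on
`Fin K → ℝ` is the sup-norm. -/
theorem lse_hessian_comparison (K : ℕ) (hK : 1 ≤ K) (z₁ z₂ : Fin K → ℝ) :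
    (lseHess K z₂ - Real.exp (-(3 * Real.sqrt 2 * ‖z₁ - z₂‖)) • lseHess K z₁).PosSemidef ∧
    (Real.exp (3 * Real.sqrt 2 * ‖z₁ - z₂‖) • lseHess K z₁ - lseHess K z₂).PosSemidef := by
  set t := ‖z₁ - z₂‖ with ht
  have htnn : 0 ≤ t := norm_nonneg _
  have h34 : 4 * t ≤ 3 * Real.sqrt 2 * t := by nlinarith [sqrt2_ge]
  have hrev : ‖z₂ - z₁‖ = t := by rw [ht, norm_sub_rev]
  have hq : ∀ (c : ℝ) (A B : Matrix (Fin K) (Fin K) ℝ) (x : Fin K → ℝ),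
      dotProduct (star x) ((A - c • B) *ᵥ x)
        = x ⬝ᵥ (A *ᵥ x) - c * (x ⬝ᵥ (B *ᵥ x)) := by
    intro c A B x
    rw [star_trivial, Matrix.sub_mulVec, Matrix.smul_mulVec, dotProduct_sub,
      dotProduct_smul]
    rfl
  have hherm : ∀ (c : ℝ) (u v : Fin K → ℝ),
      (lseHess K u - c • lseHess K v).IsHermitian :=
    fun c u v => (lseHess_herm K u).sub (herm_smul c (lseHess_herm K v))
  constructor
  · refine Matrix.PosSemidef.of_dotProduct_mulVec_nonneg (hherm _ _ _) fun x => ?_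
    rw [hq, quad_eq, quad_eq, sub_nonneg]
    have h1 : Real.exp (-(3 * Real.sqrt 2 * t)) * Qf K z₁ x
        ≤ Real.exp (-(4 * t)) * Qf K z₁ x :=
      mul_le_mul_of_nonneg_right (Real.exp_le_exp.2 (by linarith)) (Qf_nonneg K z₁ x)
    exact h1.trans (Qf_comp K z₁ z₂ x)
  · have hsm : ∀ (c : ℝ) (u v : Fin K → ℝ),
        (c • lseHess K u - lseHess K v).IsHermitian :=
      fun c u v => (herm_smul c (lseHess_herm K u)).sub (lseHess_herm K v)
    refine Matrix.PosSemidef.of_dotProduct_mulVec_nonneg (hsm _ _ _) fun x => ?_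
    have hq2 : dotProduct (star x)
        ((Real.exp (3 * Real.sqrt 2 * t) • lseHess K z₁ - lseHess K z₂) *ᵥ x)
        = Real.exp (3 * Real.sqrt 2 * t) * Qf K z₁ x - Qf K z₂ x := by
      rw [star_trivial, Matrix.sub_mulVec, Matrix.smul_mulVec, dotProduct_sub,
        dotProduct_smul, ← quad_eq, ← quad_eq]
      rfl
    rw [hq2, sub_nonneg]
    have hc := Qf_comp K z₂ z₁ x
    rw [hrev] at hc
    have h4 : Qf K z₂ x ≤ Real.exp (4 * t) * Qf K z₁ x := by
      have h := mul_le_mul_of_nonneg_left hc (Real.exp_pos (4*t)).le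
      rwa [← mul_assoc, ← Real.exp_add, show (4*t) + -(4*t) = 0 from by ring,
        Real.exp_zero, one_mul] at h
    refine h4.trans (mul_le_mul_of_nonneg_right (Real.exp_le_exp.2 (by linarith))
      (Qf_nonneg K z₁ x))
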